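/- (Two-point intersection lemma) Let f: 𝒟 × Q → ℝ∪{∞} be affine in its first argument and convex in its second, with Q compact convex, and suppose min_{q∈Q} f(p,q) ≤ 0 for all p in the convex set 𝒟. For p ∈ 𝒟 define Q(p) = {q ∈ Q : f(p,q) ≤ 0}, assumed compact, convex, nonempty. Then for any p₁, p₂ ∈ 𝒟, Q(p₁) ∩ Q(p₂) ≠ ∅. -/

import Mathlib

open Filter Topology Set

lemma ereal_bot_spread {V : Type*} [NormedAddCommGroup V] [NormedSpace ℝ V]
    (Q : Set V) (hQconv : Convex ℝ Q) (g : V → EReal)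
    (hconv : ∀ q₁ ∈ Q, ∀ q₂ ∈ Q, ∀ a b : ℝ, 0 ≤ a → 0 ≤ b → a + b = 1 →
      g (a • q₁ + b • q₂) ≤ (a : EReal) * g q₁ + (b : EReal) * g q₂)
    (hlsc : LowerSemicontinuousOn g Q)
    (q₀ : V) (hq₀ : q₀ ∈ Q) (hbot : g q₀ = ⊥) :
    ∀ q ∈ Q, g q = ⊥ := by
  intro q hq
  by_contra hne
  have hqbot : (⊥ : EReal) < g q := Ne.bot_lt hne
  set ε : ℕ → ℝ := fun n => 1 / (n + 1) with hε
  have hεpos : ∀ n, 0 < ε n := fun n => Nat.one_div_pos_of_nat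
  have hεle : ∀ n, ε n ≤ 1 := by
    intro n
    rw [hε]
    rw [div_le_one (by positivity)]
    simp
  set z : ℕ → V := fun n => (1 - ε n) • q + ε n • q₀ with hz
  have hzQ : ∀ n, z n ∈ Q := fun n =>
    hQconv hq hq₀ (by linarith [hεle n]) (hεpos n).le (by ring)
  have hzbot : ∀ n, g (z n) = ⊥ := by
    intro n
    have h1 := hconv q hq q₀ hq₀ (1 - ε n) (ε n) (by linarith [hεle n]) (hεpos n).le (by ring)
    rw [hbot, EReal.coe_mul_bot_of_pos (hεpos n), EReal.add_bot] at h1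
    exact le_bot_iff.1 h1
  have hεlim : Tendsto ε atTop (𝓝 0) := tendsto_one_div_add_atTop_nhds_zero_nat
  have hzlim : Tendsto z atTop (𝓝 q) := by
    have h1 : Tendsto (fun n => (1 - ε n) • q + ε n • q₀) atTop
        (𝓝 ((1 - (0:ℝ)) • q + (0:ℝ) • q₀)) :=
      (((tendsto_const_nhds.sub hεlim).smul_const q).add (hεlim.smul_const q₀))
    simpa using h1
  have hzlim' : Tendsto z atTop (𝓝[Q] q) :=
    tendsto_nhdsWithin_of_tendsto_nhds_of_eventually_within _ hzlim
      (Eventually.of_forall hzQ)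
  have := (hzlim'.eventually ((hlsc q hq) ⊥ hqbot)).exists
  obtain ⟨n, hn⟩ := this
  rw [hzbot n] at hn
  exact lt_irrefl _ hn

lemma ereal_aux_limit {V : Type*} [NormedAddCommGroup V] [NormedSpace ℝ V]
    (Q : Set V) (hQc : IsCompact Q)
    (f1 f2 : V → EReal)
    (h1lsc : LowerSemicontinuousOn f1 Q) (h2lsc : LowerSemicontinuousOn f2 Q)
    (H1 : ∀ q ∈ Q, ⊥ < f1 q)
    (t : ℕ → ℝ) (t0 : ℝ) (ht : Tendsto t atTop (𝓝 t0))
    (htmem : ∀ n, t n ∈ Icc (0:ℝ) 1) (ht0 : t0 ∈ Icc (0:ℝ) 1)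
    (hyp : ∀ n, ∃ q ∈ Q, f1 q ≤ 0 ∧
      ((1 - t n : ℝ) : EReal) * f1 q + ((t n : ℝ) : EReal) * f2 q ≤ 0) :
    ∃ q ∈ Q, f1 q ≤ 0 ∧
      ((1 - t0 : ℝ) : EReal) * f1 q + ((t0 : ℝ) : EReal) * f2 q ≤ 0 := by
  choose qs hqsQ hqs1 hqs2 using hyp
  obtain ⟨q, hqQ, φ, hφ, hconv⟩ := hQc.tendsto_subseq hqsQ
  have hseqQ : Tendsto (fun n => qs (φ n)) atTop (𝓝[Q] q) :=
    tendsto_nhdsWithin_of_tendsto_nhds_of_eventually_within _ hconv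
      (Eventually.of_forall fun n => hqsQ (φ n))
  have htφ : Tendsto (fun n => t (φ n)) atTop (𝓝 t0) := ht.comp hφ.tendsto_atTop
  have hf1q : f1 q ≤ 0 := by
    by_contra h
    push_neg at h
    obtain ⟨n, hn⟩ := (hseqQ.eventually ((h1lsc q hqQ) 0 h)).exists
    exact absurd (hqs1 (φ n)) (not_le.2 hn)
  refine ⟨q, hqQ, hf1q, ?_⟩
  by_contra hcon
  push_neg at hcon
  have hA : ((1 - t0 : ℝ) : EReal) * f1 q ≤ 0 :=
    mul_nonpos_of_nonneg_of_nonpos (by exact_mod_cast (by linarith [ht0.2] : (0:ℝ) ≤ 1 - t0)) hf1q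
  have hBpos : 0 < ((t0 : ℝ) : EReal) * f2 q := by
    by_contra h
    push_neg at h
    exact absurd (add_nonpos hA h) (not_le.2 hcon)
  have ht0pos : 0 < t0 := by
    rcases ht0.1.lt_or_eq with h | h
    · exact h
    · exfalso
      rw [← h] at hBpos
      simp [EReal.zero_mul] at hBpos
  have hf2pos : 0 < f2 q := by
    by_contra h
    push_neg at h
    exact absurd (mul_nonpos_of_nonneg_of_nonpos (by exact_mod_cast ht0pos.le) h)
      (not_le.2 hBpos)
  have hne_top : f1 q ≠ ⊤ := fun h => by rw [h] at hf1q; exact absurd hf1q (by simp)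
  set x : ℝ := (f1 q).toReal with hxdef
  have hxe : ((x : ℝ) : EReal) = f1 q := EReal.coe_toReal hne_top (H1 q hqQ).ne'
  obtain ⟨b, c, hb_lt, hc_lt, hpos⟩ :
      ∃ b c : ℝ, (b : EReal) < f1 q ∧ (c : EReal) < f2 q ∧ 0 < (1 - t0) * b + t0 * c := by
    rcases eq_or_ne (f2 q) ⊤ with h | h
    · refine ⟨x - 1, (1 - (1 - t0) * (x - 1)) / t0, ?_, ?_, ?_⟩
      · rw [← hxe]; exact_mod_cast (by linarith : x - 1 < x)
      · rw [h]; exact EReal.coe_lt_top _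
      · have ht0ne : t0 ≠ 0 := ht0pos.ne'
        field_simp
        linarith
    · have hbot2 : f2 q ≠ ⊥ := (lt_trans (by simp) hf2pos).ne'
      set y : ℝ := (f2 q).toReal with hydef
      have hye : ((y : ℝ) : EReal) = f2 q := EReal.coe_toReal h hbot2
      set δ : ℝ := (1 - t0) * x + t0 * y with hδdef
      have hδpos : 0 < δ := by
        have : (0 : EReal) < ((δ : ℝ) : EReal) := by
          rw [hδdef, EReal.coe_add, EReal.coe_mul, EReal.coe_mul, hxe, hye]
          exact hcon
        exact_mod_cast this
      refine ⟨x - δ / 2, y - δ / 2, ?_, ?_, ?_⟩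
      · rw [← hxe]; exact_mod_cast (by linarith : x - δ / 2 < x)
      · rw [← hye]; exact_mod_cast (by linarith : y - δ / 2 < y)
      · have ht1 : t0 ≤ 1 := ht0.2
        nlinarith
  have hev1 : ∀ᶠ n in atTop, (b : EReal) < f1 (qs (φ n)) :=
    hseqQ.eventually ((h1lsc q hqQ) b hb_lt)
  have hev2 : ∀ᶠ n in atTop, (c : EReal) < f2 (qs (φ n)) :=
    hseqQ.eventually ((h2lsc q hqQ) c hc_lt)
  have hev3 : ∀ᶠ n in atTop, 0 < (1 - t (φ n)) * b + (t (φ n)) * c := by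
    have hcont : Tendsto (fun n => (1 - t (φ n)) * b + (t (φ n)) * c) atTop
        (𝓝 ((1 - t0) * b + t0 * c)) :=
      ((tendsto_const_nhds.sub htφ).mul_const b).add (htφ.mul_const c)
    exact hcont.eventually (eventually_gt_nhds hpos)
  obtain ⟨n, h1n, h2n, h3n⟩ := (hev1.and (hev2.and hev3)).exists
  have hle := hqs2 (φ n)
  have hmem := htmem (φ n)
  have hb' : ((1 - t (φ n) : ℝ) : EReal) * (b : EReal) ≤
      ((1 - t (φ n) : ℝ) : EReal) * f1 (qs (φ n)) :=
    mul_le_mul_of_nonneg_left h1n.le (by exact_mod_cast (by linarith [hmem.2] : (0:ℝ) ≤ 1 - t (φ n)))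
  have hc' : ((t (φ n) : ℝ) : EReal) * (c : EReal) ≤
      ((t (φ n) : ℝ) : EReal) * f2 (qs (φ n)) :=
    mul_le_mul_of_nonneg_left h2n.le (by exact_mod_cast hmem.1)
  have hfinal : (((1 - t (φ n)) * b + (t (φ n)) * c : ℝ) : EReal) ≤ 0 := by
    calc (((1 - t (φ n)) * b + (t (φ n)) * c : ℝ) : EReal)
        = ((1 - t (φ n) : ℝ) : EReal) * (b : EReal) + ((t (φ n) : ℝ) : EReal) * (c : EReal) := by
          rw [EReal.coe_add, EReal.coe_mul, EReal.coe_mul]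
      _ ≤ ((1 - t (φ n) : ℝ) : EReal) * f1 (qs (φ n)) +
          ((t (φ n) : ℝ) : EReal) * f2 (qs (φ n)) := add_le_add hb' hc'
      _ ≤ 0 := hle
  have : (1 - t (φ n)) * b + (t (φ n)) * c ≤ 0 := EReal.coe_nonpos.1 hfinal
  linarith


/-- two-point intersection lemma: let `f : 𝒟 × Q → ℝ ∪ {∞}` be affine in
its first argument and convex, lower semicontinuous in its second, with `Q` a compact
convex subset of a finite-dimensional real vector space, and suppose
`min_{q∈Q} f(p,q) ≤ 0` for all `p` in the convex set `𝒟`, with each sublevel set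
`Q(p) = {q ∈ Q : f(p,q) ≤ 0}` compact, convex, nonempty. Then for any `p₁, p₂ ∈ 𝒟`,
`Q(p₁) ∩ Q(p₂) ≠ ∅`. -/
theorem two_point_intersection_lemma
    {W V : Type*} [AddCommGroup W] [Module ℝ W]
    [NormedAddCommGroup V] [NormedSpace ℝ V] [FiniteDimensional ℝ V]
    (𝒟 : Set W) (hD : Convex ℝ 𝒟)
    (Q : Set V) (hQc : IsCompact Q) (hQconv : Convex ℝ Q) (hQne : Q.Nonempty)
    (f : W → V → EReal)
    (haff : ∀ p₁ ∈ 𝒟, ∀ p₂ ∈ 𝒟, ∀ a b : ℝ, 0 ≤ a → 0 ≤ b → a + b = 1 →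
      ∀ q ∈ Q, f (a • p₁ + b • p₂) q = (a : EReal) * f p₁ q + (b : EReal) * f p₂ q)
    (hconv : ∀ p ∈ 𝒟, ∀ q₁ ∈ Q, ∀ q₂ ∈ Q, ∀ a b : ℝ, 0 ≤ a → 0 ≤ b → a + b = 1 →
      f p (a • q₁ + b • q₂) ≤ (a : EReal) * f p q₁ + (b : EReal) * f p q₂)
    (hlsc : ∀ p ∈ 𝒟, LowerSemicontinuousOn (f p) Q)
    (hsub : ∀ p ∈ 𝒟,
      IsCompact {q ∈ Q | f p q ≤ 0} ∧ Convex ℝ {q ∈ Q | f p q ≤ 0} ∧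
        {q ∈ Q | f p q ≤ 0}.Nonempty) :
    ∀ p₁ ∈ 𝒟, ∀ p₂ ∈ 𝒟, ∃ q ∈ Q, f p₁ q ≤ 0 ∧ f p₂ q ≤ 0 := by
  intro p₁ hp₁ p₂ hp₂
  -- dispose of the case where f p₁ or f p₂ takes the value ⊥ somewhere on Q
  by_cases hb1 : ∃ q₀ ∈ Q, f p₁ q₀ = ⊥
  · obtain ⟨q₀, hq₀Q, hq₀⟩ := hb1
    obtain ⟨q, hqQ, hq⟩ := (hsub p₂ hp₂).2.2
    refine ⟨q, hqQ, ?_, hq⟩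
    rw [ereal_bot_spread Q hQconv (f p₁) (hconv p₁ hp₁) (hlsc p₁ hp₁) q₀ hq₀Q hq₀ q hqQ]
    exact bot_le
  by_cases hb2 : ∃ q₀ ∈ Q, f p₂ q₀ = ⊥
  · obtain ⟨q₀, hq₀Q, hq₀⟩ := hb2
    obtain ⟨q, hqQ, hq⟩ := (hsub p₁ hp₁).2.2
    refine ⟨q, hqQ, hq, ?_⟩
    rw [ereal_bot_spread Q hQconv (f p₂) (hconv p₂ hp₂) (hlsc p₂ hp₂) q₀ hq₀Q hq₀ q hqQ]
    exact bot_le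
  push_neg at hb1 hb2
  have H1 : ∀ q ∈ Q, ⊥ < f p₁ q := fun q hq => (hb1 q hq).bot_lt
  have H2 : ∀ q ∈ Q, ⊥ < f p₂ q := fun q hq => (hb2 q hq).bot_lt
  by_contra hcontra
  push_neg at hcontra
  -- the path of parameters
  set P : ℝ → W := fun t => (1 - t) • p₁ + t • p₂ with hP
  have hPD : ∀ t ∈ Icc (0:ℝ) 1, P t ∈ 𝒟 := fun t htI =>
    hD hp₁ hp₂ (by linarith [htI.2]) htI.1 (by ring)
  have hPval : ∀ t ∈ Icc (0:ℝ) 1, ∀ q ∈ Q,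
      f (P t) q = ((1 - t : ℝ) : EReal) * f p₁ q + ((t : ℝ) : EReal) * f p₂ q :=
    fun t htI q hq => haff p₁ hp₁ p₂ hp₂ (1 - t) t (by linarith [htI.2]) htI.1 (by ring) q hq
  -- dichotomy for points in a sublevel set along the path
  have dich : ∀ t ∈ Icc (0:ℝ) 1, ∀ q ∈ Q, f (P t) q ≤ 0 → f p₁ q ≤ 0 ∨ f p₂ q ≤ 0 := by
    intro t htI q hq hle
    by_contra h
    push_neg at h
    obtain ⟨h1, h2⟩ := h
    rw [hPval t htI q hq] at hle
    have e1 : (0 : EReal) ≤ ((1 - t : ℝ) : EReal) * f p₁ q :=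
      mul_nonneg (by exact_mod_cast (by linarith [htI.2] : (0:ℝ) ≤ 1 - t)) h1.le
    have e2 : (0 : EReal) ≤ ((t : ℝ) : EReal) * f p₂ q :=
      mul_nonneg (by exact_mod_cast htI.1) h2.le
    rcases lt_or_eq_of_le htI.1 with h0 | h0
    · have e2' : (0 : EReal) < ((t : ℝ) : EReal) * f p₂ q :=
        EReal.mul_pos (by exact_mod_cast h0) h2
      have : (0 : EReal) < ((1 - t : ℝ) : EReal) * f p₁ q + ((t : ℝ) : EReal) * f p₂ q :=
        lt_of_lt_of_le e2' (le_add_of_nonneg_left e1)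
      exact absurd hle (not_le.2 this)
    · have e1' : (0 : EReal) < ((1 - t : ℝ) : EReal) * f p₁ q :=
        EReal.mul_pos (by exact_mod_cast (by linarith : (0:ℝ) < 1 - t)) h1
      have : (0 : EReal) < ((1 - t : ℝ) : EReal) * f p₁ q + ((t : ℝ) : EReal) * f p₂ q :=
        lt_of_lt_of_le e1' (le_add_of_nonneg_right e2)
      exact absurd hle (not_le.2 this)
  -- the set S
  set S : Set ℝ := {t | t ∈ Icc (0:ℝ) 1 ∧ ∃ q ∈ Q, f p₁ q ≤ 0 ∧ f (P t) q ≤ 0} with hS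
  have h0I : (0:ℝ) ∈ Icc (0:ℝ) 1 := by norm_num
  have h0S : (0:ℝ) ∈ S := by
    obtain ⟨q, hqQ, hq⟩ := (hsub p₁ hp₁).2.2
    refine ⟨h0I, q, hqQ, hq, ?_⟩
    rw [hPval 0 h0I q hqQ]
    norm_num
    exact hq
  have hSbdd : BddAbove S := ⟨1, fun t ht => ht.1.2⟩
  have hSne : S.Nonempty := ⟨0, h0S⟩
  set t₀ : ℝ := sSup S with ht₀
  have ht₀I : t₀ ∈ Icc (0:ℝ) 1 := ⟨le_csSup hSbdd h0S, csSup_le hSne fun t ht => ht.1.2⟩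
  -- t₀ ∈ S via the limit lemma
  obtain ⟨u, huS, hulim⟩ := mem_closure_iff_seq_limit.1 (csSup_mem_closure hSne hSbdd)
  obtain ⟨qA, hqAQ, hqA1, hqA2⟩ :=
    ereal_aux_limit Q hQc (f p₁) (f p₂) (hlsc p₁ hp₁) (hlsc p₂ hp₂) H1 u t₀ hulim
      (fun n => (huS n).1) ht₀I
      (by
        intro n
        obtain ⟨q, hqQ, hq1, hq2⟩ := (huS n).2
        exact ⟨q, hqQ, hq1, by rw [← hPval (u n) (huS n).1 q hqQ]; exact hq2⟩)
  have hqA2' : f (P t₀) qA ≤ 0 := by rw [hPval t₀ ht₀I qA hqAQ]; exact hqA2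
  rcases lt_or_eq_of_le ht₀I.2 with ht₀lt | ht₀eq
  · -- t₀ < 1 : approach from the right in the complement
    set v : ℕ → ℝ := fun n => t₀ + (1 - t₀) / (n + 1) with hv
    have hveq : ∀ n : ℕ, v n = t₀ + (1 - t₀) / (n + 1) := fun n => rfl
    have hvpos : ∀ n : ℕ, (0:ℝ) < (1 - t₀) / (n + 1) :=
      fun n => div_pos (by linarith) (by positivity)
    have hvsmall : ∀ n : ℕ, (1 - t₀) / (n + 1) ≤ 1 - t₀ := by
      intro n
      rw [div_le_iff₀ (by positivity)]
      nlinarith [ht₀lt.le]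
    have hvmem : ∀ n, v n ∈ Icc (0:ℝ) 1 := by
      intro n
      rw [hveq n]
      constructor
      · linarith [ht₀I.1, (hvpos n).le]
      · linarith [hvsmall n]
    have hvgt : ∀ n, t₀ < v n := by
      intro n
      rw [hveq n]
      linarith [hvpos n]
    have hvnotS : ∀ n, v n ∉ S := fun n => notMem_of_csSup_lt (hvgt n) hSbdd
    have hvT : ∀ n, ∃ q ∈ Q, f p₂ q ≤ 0 ∧ f (P (v n)) q ≤ 0 := by
      intro n
      obtain ⟨q, hqQ, hq⟩ := (hsub (P (v n)) (hPD (v n) (hvmem n))).2.2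
      rcases dich (v n) (hvmem n) q hqQ hq with h | h
      · exact absurd ⟨hvmem n, q, hqQ, h, hq⟩ (hvnotS n)
      · exact ⟨q, hqQ, h, hq⟩
    have hvlim : Tendsto (fun n => 1 - v n) atTop (𝓝 (1 - t₀)) := by
      have h1 : Tendsto (fun n : ℕ => (1:ℝ) / (n + 1)) atTop (𝓝 0) :=
        tendsto_one_div_add_atTop_nhds_zero_nat
      have h3 : Tendsto (fun n : ℕ => (1 - t₀) * (1 / (n + 1))) atTop (𝓝 ((1 - t₀) * 0)) :=
        h1.const_mul (1 - t₀)
      have h4 : Tendsto (fun n : ℕ => (1:ℝ) - (t₀ + (1 - t₀) * (1 / (n + 1)))) atTop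
          (𝓝 ((1:ℝ) - (t₀ + (1 - t₀) * 0))) :=
        Filter.Tendsto.sub tendsto_const_nhds (Filter.Tendsto.add tendsto_const_nhds h3)
      have h5 : (1 : ℝ) - (t₀ + (1 - t₀) * 0) = 1 - t₀ := by ring
      rw [h5] at h4
      exact h4.congr (fun n => by rw [hveq n]; ring)
    obtain ⟨qB, hqBQ, hqB1, hqB2⟩ :=
      ereal_aux_limit Q hQc (f p₂) (f p₁) (hlsc p₂ hp₂) (hlsc p₁ hp₁) H2
        (fun n => 1 - v n) (1 - t₀) hvlim
        (fun n => ⟨by linarith [(hvmem n).2], by linarith [(hvmem n).1]⟩)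
        ⟨by linarith [ht₀I.2], by linarith [ht₀I.1]⟩
        (by
          intro n
          obtain ⟨q, hqQ, hq1, hq2⟩ := hvT n
          refine ⟨q, hqQ, hq1, ?_⟩
          rw [hPval (v n) (hvmem n) q hqQ] at hq2
          have : (1 - (1 - v n) : ℝ) = v n := by ring
          rw [this]
          rw [add_comm] at hq2
          exact hq2)
    have hqB2' : f (P t₀) qB ≤ 0 := by
      rw [hPval t₀ ht₀I qB hqBQ]
      have h1 : (1 - (1 - t₀) : ℝ) = t₀ := by ring
      rw [h1] at hqB2
      rw [add_comm]
      exact hqB2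
    -- segment argument
    set A : Set V := {q ∈ Q | f p₁ q ≤ 0} with hA
    set B : Set V := {q ∈ Q | f p₂ q ≤ 0} with hB
    have hAclosed : IsClosed A := (hsub p₁ hp₁).1.isClosed
    have hBclosed : IsClosed B := (hsub p₂ hp₂).1.isClosed
    have hABdisj : A ∩ B = ∅ := by
      ext q
      simp only [Set.mem_inter_iff, Set.mem_empty_iff_false, iff_false]
      rintro ⟨⟨hqQ, h1⟩, ⟨_, h2⟩⟩
      exact absurd h2 (not_le.2 (hcontra q hqQ h1))
    set C : Set V := {q ∈ Q | f (P t₀) q ≤ 0} with hC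
    have hCconv : Convex ℝ C := (hsub (P t₀) (hPD t₀ ht₀I)).2.1
    have hqAC : qA ∈ C := ⟨hqAQ, hqA2'⟩
    have hqBC : qB ∈ C := ⟨hqBQ, hqB2'⟩
    have hsegC : segment ℝ qA qB ⊆ C := hCconv.segment_subset hqAC hqBC
    have hsegAB : segment ℝ qA qB ⊆ A ∪ B := by
      intro q hq
      obtain ⟨hqQ, hqle⟩ := hsegC hq
      rcases dich t₀ ht₀I q hqQ hqle with h | h
      · exact Or.inl ⟨hqQ, h⟩
      · exact Or.inr ⟨hqQ, h⟩
    have hpre : IsPreconnected (segment ℝ qA qB) := (convex_segment qA qB).isPreconnected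
    have hsub_union : segment ℝ qA qB ⊆ Bᶜ ∪ Aᶜ := by
      intro q hq
      rcases hsegAB hq with h | h
      · left
        intro hqB
        have : q ∈ A ∩ B := ⟨h, hqB⟩
        rw [hABdisj] at this
        exact this
      · right
        intro hqA
        have : q ∈ A ∩ B := ⟨hqA, h⟩
        rw [hABdisj] at this
        exact this
    have hAin : qA ∈ A := ⟨hqAQ, hqA1⟩
    have hBin : qB ∈ B := ⟨hqBQ, hqB1⟩
    have hmeet1 : (segment ℝ qA qB ∩ Bᶜ).Nonempty := by
      refine ⟨qA, left_mem_segment ℝ qA qB, ?_⟩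
      intro hqB
      have : qA ∈ A ∩ B := ⟨hAin, hqB⟩
      rw [hABdisj] at this
      exact this
    have hmeet2 : (segment ℝ qA qB ∩ Aᶜ).Nonempty := by
      refine ⟨qB, right_mem_segment ℝ qA qB, ?_⟩
      intro hqA'
      have : qB ∈ A ∩ B := ⟨hqA', hBin⟩
      rw [hABdisj] at this
      exact this
    obtain ⟨q, hqseg, hqBc, hqAc⟩ :=
      hpre Bᶜ Aᶜ hBclosed.isOpen_compl hAclosed.isOpen_compl hsub_union hmeet1 hmeet2
    rcases hsegAB hqseg with h | h
    · exact hqAc h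
    · exact hqBc h
  · -- t₀ = 1 : direct contradiction
    have hP1 : P 1 = p₂ := by
      rw [hP]
      simp
    rw [ht₀eq, hP1] at hqA2'
    exact absurd hqA2' (not_le.2 (hcontra qA hqAQ hqA1))
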